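/- Suppose the co-execution group is unsaturated, and let (j_1, j_2, …, j_n) be any enumeration of J with j_1 = j*. Define explicit round-robin start times ρ_{j_i} = ∑_{l < i} r_{j_l} and τ_{j_i} = r_{j*} + ∑_{l < i} t_{j_l} for i = 1, …, n. Then these start times form a period-s* schedule: the rollout intervals [ρ_{j_i}, ρ_{j_i} + r_{j_i}) are pairwise disjoint and contained in [0, s*); the training intervals [τ_{j_i}, τ_{j_i} + t_{j_i}) are pairwise disjoint and contained in [r_{j*}, r_{j*} + s*); ρ_{j_i} + r_{j_i} ≤ τ_{j_i} for every i; and τ_{j_i} + t_{j_i} ≤ ρ_{j_i} + s* for every i. -/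

import Mathlib

/-- Suppose the co-execution group is unsaturated, and let
`(j_1, …, j_n)` be any enumeration of `J` with `j_1 = j*` (here the enumeration is
the injective map `f : Fin n → ι` whose image is `J`, with `f 0 = j*`). Define the
explicit round-robin start times `ρ_{j_i} = ∑_{l < i} r (f l)` and
`τ_{j_i} = r j* + ∑_{l < i} t (f l)`. Then these start times form a period-`s*`
schedule: the rollout intervals are pairwise disjoint and contained in `[0, s*)`;
the training intervals are pairwise disjoint and contained in `[r j*, r j* + s*)`;
`ρ_{j_i} + r_{j_i} ≤ τ_{j_i}`; and `τ_{j_i} + t_{j_i} ≤ ρ_{j_i} + s*`. -/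
theorem roundRobin_explicit_schedule {ι : Type*} (J : Finset ι) (hJ : J.Nonempty)
    (r t : ι → ℝ) (hr : ∀ j ∈ J, 0 ≤ r j) (ht : ∀ j ∈ J, 0 ≤ t j)
    (s : ι → ℝ) (hs : ∀ j, s j = r j + t j)
    (jstar : ι) (hjstar : jstar ∈ J) (hmax : ∀ j ∈ J, s j ≤ s jstar)
    (hunsat_r : ∑ j ∈ J, r j ≤ s jstar) (hunsat_t : ∑ j ∈ J, t j ≤ s jstar)
    (n : ℕ) (hn : 0 < n) (f : Fin n → ι)
    (hfinj : Function.Injective f)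
    (hfmem : ∀ i : Fin n, f i ∈ J) (hfsurj : ∀ j ∈ J, ∃ i : Fin n, f i = j)
    (hf0 : f ⟨0, hn⟩ = jstar)
    (ρ τ : Fin n → ℝ)
    (hρ : ∀ i : Fin n, ρ i = ∑ l ∈ Finset.Iio i, r (f l))
    (hτ : ∀ i : Fin n, τ i = r jstar + ∑ l ∈ Finset.Iio i, t (f l)) :
    (∀ i j : Fin n, i ≠ j →
        Disjoint (Set.Ico (ρ i) (ρ i + r (f i))) (Set.Ico (ρ j) (ρ j + r (f j)))) ∧
    (∀ i : Fin n, Set.Ico (ρ i) (ρ i + r (f i)) ⊆ Set.Ico 0 (s jstar)) ∧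
    (∀ i j : Fin n, i ≠ j →
        Disjoint (Set.Ico (τ i) (τ i + t (f i))) (Set.Ico (τ j) (τ j + t (f j)))) ∧
    (∀ i : Fin n, Set.Ico (τ i) (τ i + t (f i)) ⊆
        Set.Ico (r jstar) (r jstar + s jstar)) ∧
    (∀ i : Fin n, ρ i + r (f i) ≤ τ i) ∧
    (∀ i : Fin n, τ i + t (f i) ≤ ρ i + s jstar) := by

  classical
  set z : Fin n := ⟨0, hn⟩ with hz
  have hr' : ∀ l : Fin n, 0 ≤ r (f l) := fun l => hr _ (hfmem l)
  have ht' : ∀ l : Fin n, 0 ≤ t (f l) := fun l => ht _ (hfmem l)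
  have hsum_r : ∑ l : Fin n, r (f l) = ∑ j ∈ J, r j := by
    apply Finset.sum_bij (fun l _ => f l)
    · exact fun l _ => hfmem l
    · exact fun a _ b _ h => hfinj h
    · intro j hj; obtain ⟨i, hi⟩ := hfsurj j hj; exact ⟨i, Finset.mem_univ i, hi⟩
    · intros; rfl
  have hsum_t : ∑ l : Fin n, t (f l) = ∑ j ∈ J, t j := by
    apply Finset.sum_bij (fun l _ => f l)
    · exact fun l _ => hfmem l
    · exact fun a _ b _ h => hfinj h
    · intro j hj; obtain ⟨i, hi⟩ := hfsurj j hj; exact ⟨i, Finset.mem_univ i, hi⟩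
    · intros; rfl
  have hIic : ∀ i : Fin n, insert i (Finset.Iio i) = Finset.Iic i := by
    intro i
    ext x
    simp [Finset.mem_Iio, Finset.mem_Iic, le_iff_lt_or_eq, or_comm]
  have hsumIic_r : ∀ i : Fin n, ρ i + r (f i) = ∑ l ∈ Finset.Iic i, r (f l) := by
    intro i
    rw [hρ, ← hIic, Finset.sum_insert (by simp)]; ring
  have hsumIic_t : ∀ i : Fin n, τ i + t (f i)
      = r jstar + ∑ l ∈ Finset.Iic i, t (f l) := by
    intro i
    rw [hτ, ← hIic, Finset.sum_insert (by simp)]; ring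
  have key_r : ∀ i j : Fin n, i < j → ρ i + r (f i) ≤ ρ j := by
    intro i j hij
    rw [hsumIic_r, hρ]
    apply Finset.sum_le_sum_of_subset_of_nonneg
    · intro x hx
      simp only [Finset.mem_Iic] at hx
      simp only [Finset.mem_Iio]
      exact lt_of_le_of_lt hx hij
    · exact fun l _ _ => hr' l
  have key_t : ∀ i j : Fin n, i < j → τ i + t (f i) ≤ τ j := by
    intro i j hij
    rw [hsumIic_t, hτ]
    have : ∑ l ∈ Finset.Iic i, t (f l) ≤ ∑ l ∈ Finset.Iio j, t (f l) := by
      apply Finset.sum_le_sum_of_subset_of_nonneg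
      · intro x hx
        simp only [Finset.mem_Iic] at hx
        simp only [Finset.mem_Iio]
        exact lt_of_le_of_lt hx hij
      · exact fun l _ _ => ht' l
    linarith
  have bound_r : ∀ i : Fin n, ρ i + r (f i) ≤ s jstar := by
    intro i
    rw [hsumIic_r]
    calc ∑ l ∈ Finset.Iic i, r (f l) ≤ ∑ l : Fin n, r (f l) :=
          Finset.sum_le_sum_of_subset_of_nonneg (Finset.subset_univ _)
            (fun l _ _ => hr' l)
      _ = ∑ j ∈ J, r j := hsum_r
      _ ≤ s jstar := hunsat_r
  have bound_t : ∀ i : Fin n, τ i + t (f i) ≤ r jstar + s jstar := by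
    intro i
    rw [hsumIic_t]
    have : ∑ l ∈ Finset.Iic i, t (f l) ≤ s jstar := by
      calc ∑ l ∈ Finset.Iic i, t (f l) ≤ ∑ l : Fin n, t (f l) :=
            Finset.sum_le_sum_of_subset_of_nonneg (Finset.subset_univ _)
              (fun l _ _ => ht' l)
        _ = ∑ j ∈ J, t j := hsum_t
        _ ≤ s jstar := hunsat_t
    linarith
  have hρ_nonneg : ∀ i : Fin n, 0 ≤ ρ i := by
    intro i
    rw [hρ]
    exact Finset.sum_nonneg fun l _ => hr' l
  have hτ_ge : ∀ i : Fin n, r jstar ≤ τ i := by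
    intro i
    rw [hτ]
    have : 0 ≤ ∑ l ∈ Finset.Iio i, t (f l) := Finset.sum_nonneg fun l _ => ht' l
    linarith
  have hz_lt : ∀ i : Fin n, i ≠ z → z < i := by
    intro i hi
    have : i.val ≠ 0 := fun h => hi (Fin.ext h)
    exact Fin.lt_def.mpr (Nat.pos_of_ne_zero this)
  have hρz : ρ z = 0 := by
    rw [hρ]
    have : Finset.Iio z = ∅ := by
      ext x
      simp only [Finset.mem_Iio, Finset.notMem_empty, iff_false, not_lt, Fin.le_def,
        Fin.lt_def]
      exact Nat.zero_le _
    simp [this]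
  have hτz : τ z = r jstar := by
    rw [hτ]
    have : Finset.Iio z = ∅ := by
      ext x
      simp only [Finset.mem_Iio, Finset.notMem_empty, iff_false, not_lt, Fin.le_def,
        Fin.lt_def]
      exact Nat.zero_le _
    simp [this]
  refine ⟨?_, ?_, ?_, ?_, ?_, ?_⟩
  · intro i j hij
    rw [Set.Ico_disjoint_Ico]
    rcases hij.lt_or_gt with h | h
    · exact le_trans (min_le_left _ _) (le_trans (key_r i j h) (le_max_right _ _))
    · exact le_trans (min_le_right _ _) (le_trans (key_r j i h) (le_max_left _ _))
  · intro i x hx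
    obtain ⟨h1, h2⟩ := hx
    exact ⟨le_trans (hρ_nonneg i) h1, lt_of_lt_of_le h2 (bound_r i)⟩
  · intro i j hij
    rw [Set.Ico_disjoint_Ico]
    rcases hij.lt_or_gt with h | h
    · exact le_trans (min_le_left _ _) (le_trans (key_t i j h) (le_max_right _ _))
    · exact le_trans (min_le_right _ _) (le_trans (key_t j i h) (le_max_left _ _))
  · intro i x hx
    obtain ⟨h1, h2⟩ := hx
    exact ⟨le_trans (hτ_ge i) h1, lt_of_lt_of_le h2 (bound_t i)⟩
  · intro i
    by_cases hiz : i = z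
    · subst hiz
      rw [hρz, hτz, hf0]
      linarith
    · have hzi := hz_lt i hiz
      have h1 : ρ i + r (f i) ≤ s jstar := bound_r i
      have h2 : t jstar ≤ ∑ l ∈ Finset.Iio i, t (f l) := by
        rw [← hf0]
        exact Finset.single_le_sum (fun l _ => ht' l)
          (Finset.mem_Iio.mpr hzi)
      rw [hτ]
      have := hs jstar
      linarith
  · intro i
    by_cases hiz : i = z
    · subst hiz
      rw [hρz, hτz, hf0, hs jstar]
      linarith
    · have hzi := hz_lt i hiz
      have hzIic : z ∈ Finset.Iic i := Finset.mem_Iic.mpr hzi.le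
      have h1 : ∑ l ∈ Finset.Iic i, t (f l)
          = t (f z) + ∑ l ∈ (Finset.Iic i).erase z, t (f l) := by
        exact (Finset.add_sum_erase _ _ hzIic).symm
      have h2 : ∑ l ∈ (Finset.Iic i).erase z, t (f l)
          ≤ ∑ l ∈ (Finset.univ : Finset (Fin n)).erase z, t (f l) := by
        apply Finset.sum_le_sum_of_subset_of_nonneg
        · exact Finset.erase_subset_erase _ (Finset.subset_univ _)
        · exact fun l _ _ => ht' l
      have h3 : ∑ l ∈ (Finset.univ : Finset (Fin n)).erase z, t (f l)
          = ∑ l : Fin n, t (f l) - t (f z) := by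
        rw [← Finset.add_sum_erase _ _ (Finset.mem_univ z)]
        ring
      have h4 : ∑ l : Fin n, t (f l) ≤ s jstar := hsum_t ▸ hunsat_t
      have h5 : r jstar ≤ ρ i := by
        rw [hρ, ← hf0]
        exact Finset.single_le_sum (fun l _ => hr' l) (Finset.mem_Iio.mpr hzi)
      rw [hsumIic_t]
      rw [hf0] at h1 h3
      have := hs jstar
      linarith
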